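/- For continuous maps f, f' : X → X' and any continuous map k : Z → X, the homotopic distance satisfies D(f ∘ k, f' ∘ k) ≤ D(f, f'). -/

import Mathlib

/-- The (higher) homotopic distance of a family of continuous maps `f i : X → Y`:
the least `l` such that `X` admits an open cover by `l` open sets on each of which
all the maps restrict to pairwise homotopic maps (`∞` if no such cover exists). -/
noncomputable def homDist {X Y : Type*} [TopologicalSpace X] [TopologicalSpace Y]
    {k : ℕ} (f : Fin k → C(X, Y)) : ℕ∞ :=
  sInf ((fun n : ℕ => (n : ℕ∞)) '' {n : ℕ | ∃ U : Fin n → Set X,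
    (∀ j, IsOpen (U j)) ∧ (⋃ j, U j) = Set.univ ∧
    ∀ j i i', ((f i).restrict (U j)).Homotopic ((f i').restrict (U j))})

/-- Homotopic distance of two maps. -/
noncomputable def homDist2 {X Y : Type*} [TopologicalSpace X] [TopologicalSpace Y]
    (f g : C(X, Y)) : ℕ∞ :=
  homDist ![f, g]

theorem homDist2_comp_right_le {X X' Z : Type*} [TopologicalSpace X] [TopologicalSpace X']
    [TopologicalSpace Z] (f f' : C(X, X')) (k : C(Z, X)) :
    homDist2 (f.comp k) (f'.comp k) ≤ homDist2 f f' := by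
  unfold homDist2 homDist
  apply sInf_le_sInf
  apply Set.image_mono
  rintro n ⟨U, hopen, hcov, hhom⟩
  refine ⟨fun j => k ⁻¹' U j, fun j => (hopen j).preimage k.continuous, ?_, ?_⟩
  · rw [← Set.preimage_iUnion, hcov, Set.preimage_univ]
  · intro j i i'
    let r : C(↥(k ⁻¹' U j), ↥(U j)) :=
      ⟨fun x => ⟨k x, x.2⟩, Continuous.subtype_mk (k.continuous.comp continuous_subtype_val) _⟩
    have hr : ∀ g : C(X, X'),
        (g.comp k).restrict (k ⁻¹' U j) = (g.restrict (U j)).comp r := by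
      intro g; ext x; rfl
    have hi : ∀ m : Fin 2, (![f.comp k, f'.comp k] : Fin 2 → C(Z,X')) m = (![f, f'] m).comp k := by
      intro m; fin_cases m <;> rfl
    rw [hi i, hi i', hr, hr]
    exact ContinuousMap.Homotopic.comp (hhom j i i') (ContinuousMap.Homotopic.refl r)
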